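/- arXiv:math-ph/0606024 — 3 statements merged into one kernel-verified Lean document; each statement's English description precedes it below -/
import Mathlib

section
/- Let n : U → S² be a differentiable map on an open subset U of ℝ³. Then at each point, |∇n|² ≥ 2‖n*ω‖, where n*ω is the pullback under n of the normalized area 2-form ω on S² and ‖·‖ is the norm on 2-forms induced by the Euclidean metric on ℝ³ and the round metric on S². Equivalently, for the components of n, Σ_i |∂_i n|² ≥ 2 max_{unit u,v orthogonal} |⟨n, ∂_u n × ∂_v n⟩|. -/
open Finset

theorem stmt_4 (U : Set (EuclideanSpace ℝ (Fin 3))) (hU : IsOpen U)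
    (f : EuclideanSpace ℝ (Fin 3) → EuclideanSpace ℝ (Fin 3))
    (hf : ∀ y ∈ U, ‖f y‖ = 1) (x : EuclideanSpace ℝ (Fin 3)) (hx : x ∈ U)
    (hdiff : DifferentiableAt ℝ f x)
    (u v : EuclideanSpace ℝ (Fin 3)) (hu : ‖u‖ = 1) (hv : ‖v‖ = 1)
    (huv : (inner ℝ u v : ℝ) = 0) :
    2 * |∑ i, (f x) i *
        (crossProduct (fun j => fderiv ℝ f x u j) (fun j => fderiv ℝ f x v j)) i| ≤
      ∑ i, ‖fderiv ℝ f x (EuclideanSpace.single i 1)‖ ^ 2 := by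
  set D := fderiv ℝ f x with hD
  set p : Fin 3 → ℝ := fun j => D u j with hp
  set q : Fin 3 → ℝ := fun j => D v j with hq
  set c : EuclideanSpace ℝ (Fin 3) := WithLp.toLp 2 (crossProduct p q) with hc
  -- squared norm as a sum
  have hns : ∀ w : EuclideanSpace ℝ (Fin 3), ‖w‖ ^ 2 = ∑ j, w j * w j := by
    intro w
    rw [← real_inner_self_eq_norm_sq, PiLp.inner_apply]
    simp [RCLike.inner_apply, sq]
  -- every vector is a sum of singles
  have hw : ∀ w : EuclideanSpace ℝ (Fin 3), w = ∑ i, w i • EuclideanSpace.single i (1:ℝ) := by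
    intro w
    have h := (EuclideanSpace.basisFun (Fin 3) ℝ).toBasis.sum_repr w
    simpa [OrthonormalBasis.coe_toBasis_repr_apply, OrthonormalBasis.coe_toBasis,
      EuclideanSpace.basisFun_repr, EuclideanSpace.basisFun_apply] using h.symm
  -- entries of D w via inner products with the "rows" r j
  set r : Fin 3 → EuclideanSpace ℝ (Fin 3) :=
    fun j => WithLp.toLp 2 (fun i => D (EuclideanSpace.single i 1) j : Fin 3 → ℝ) with hr
  have hentry : ∀ (w : EuclideanSpace ℝ (Fin 3)) (j : Fin 3),
      D w j = (inner ℝ (r j) w : ℝ) := by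
    intro w j
    conv_lhs => rw [hw w, map_sum]
    have happ : (∑ i, D (w i • EuclideanSpace.single i 1)) j
        = ∑ i, D (w i • EuclideanSpace.single i 1) j := by
      exact map_sum (EuclideanSpace.proj j : EuclideanSpace ℝ (Fin 3) →L[ℝ] ℝ)
        (fun i => D (w i • EuclideanSpace.single i 1)) univ
    rw [happ, PiLp.inner_apply]
    simp [RCLike.inner_apply, hr, mul_comm]
  -- Cauchy–Schwarz step
  have hfx : ‖f x‖ = 1 := hf x hx
  have h1 : |∑ i, (f x) i * c i| ≤ ‖c‖ := by
    have h := abs_real_inner_le_norm (f x) c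
    rw [hfx, one_mul] at h
    calc |∑ i, (f x) i * c i| = |(inner ℝ (f x) c : ℝ)| := by
          rw [PiLp.inner_apply]; simp [RCLike.inner_apply, mul_comm]
      _ ≤ ‖c‖ := h
  -- Lagrange identity bound on the cross product
  have h2 : ‖c‖ ^ 2 ≤ (‖D u‖ * ‖D v‖) ^ 2 := by
    have hcc : ‖c‖ ^ 2 = dotProduct (crossProduct p q) (crossProduct p q) := by
      rw [hns]; simp [dotProduct, hc]
    rw [hcc, cross_dot_cross]
    have hpp : dotProduct p p = ‖D u‖ ^ 2 := by
      rw [hns]; simp [dotProduct, hp]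
    have hqq : dotProduct q q = ‖D v‖ ^ 2 := by
      rw [hns]; simp [dotProduct, hq]
    have hpq : dotProduct p q = dotProduct q p := by
      simp [dotProduct, mul_comm]
    rw [hpp, hqq, ← hpq]
    nlinarith [sq_nonneg (dotProduct p q)]
  have h3 : ‖c‖ ≤ ‖D u‖ * ‖D v‖ := by
    nlinarith [norm_nonneg c, mul_nonneg (norm_nonneg (D u)) (norm_nonneg (D v))]
  -- Bessel step
  have horth : Orthonormal ℝ ![u, v] := by
    rw [orthonormal_iff_ite]
    intro i j
    fin_cases i <;> fin_cases j
    · simp only [Fin.zero_eta, Matrix.cons_val_zero, if_true]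
      rw [show (inner ℝ u u : ℝ) = ‖u‖ ^ 2 from real_inner_self_eq_norm_sq u, hu]
      norm_num
    · simpa using huv
    · rw [real_inner_comm]; simpa using huv
    · simp only [Fin.mk_one, Matrix.cons_val_one, Matrix.head_cons, Matrix.cons_val_zero, if_true]
      rw [show (inner ℝ v v : ℝ) = ‖v‖ ^ 2 from real_inner_self_eq_norm_sq v, hv]
      norm_num
  have hbessel : ∀ j : Fin 3, p j * p j + q j * q j ≤ ‖r j‖ ^ 2 := by
    intro j
    have h := horth.sum_inner_products_le (𝕜 := ℝ) (r j) (s := univ)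
    rw [Fin.sum_univ_two] at h
    simp only [Matrix.cons_val_zero, Matrix.cons_val_one, Matrix.head_cons] at h
    have h1 : (inner ℝ u (r j) : ℝ) = p j := by
      rw [real_inner_comm, ← hentry u j]
    have h2 : (inner ℝ v (r j) : ℝ) = q j := by
      rw [real_inner_comm, ← hentry v j]
    rw [h1, h2] at h
    calc p j * p j + q j * q j = ‖p j‖ ^ 2 + ‖q j‖ ^ 2 := by
          simp [Real.norm_eq_abs, sq_abs, sq]
      _ ≤ ‖r j‖ ^ 2 := h
  have h4 : ‖D u‖ ^ 2 + ‖D v‖ ^ 2 ≤ ∑ i, ‖D (EuclideanSpace.single i 1)‖ ^ 2 := by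
    have hl : ‖D u‖ ^ 2 + ‖D v‖ ^ 2 = ∑ j, (p j * p j + q j * q j) := by
      rw [hns, hns, ← Finset.sum_add_distrib]
    have hrr : ∑ j, ‖r j‖ ^ 2 = ∑ i, ‖D (EuclideanSpace.single i 1)‖ ^ 2 := by
      simp_rw [hns]
      rw [Finset.sum_comm]
    rw [hl, ← hrr]
    exact Finset.sum_le_sum fun j _ => hbessel j
  nlinarith [h1, h3, h4, sq_nonneg (‖D u‖ - ‖D v‖), abs_nonneg (∑ i, (f x) i * c i)]
end

section
/- For every positive integer c and every t of the form t_l = (1 − 1/(c+1))^{1/2} e^{iα_l} with π/8 < α_l ≤ 3π/8, and every real α ∈ [0, π/2]: |e^{2iα} − t̄_l²|² ≥ sin²(π/8) and |e^{2iα} − t_l²|² ≥ 1/(c+1)² + (8/π²)(α_l − α)². -/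
open Real Complex

lemma abs_sq_key (r θ φ : ℝ) :
    ‖Complex.exp (Complex.I * θ) - (r:ℂ) * Complex.exp (Complex.I * φ)‖ ^ 2
      = (1 - r) ^ 2 + 4 * r * Real.sin ((θ - φ) / 2) ^ 2 := by
  rw [Complex.sq_norm, Complex.normSq_apply]
  have h1 : Complex.I * (θ:ℂ) = (θ:ℂ) * Complex.I := mul_comm _ _
  have h2 : Complex.I * (φ:ℂ) = (φ:ℂ) * Complex.I := mul_comm _ _
  rw [h1, h2, Complex.exp_mul_I, Complex.exp_mul_I]
  simp [Complex.cos_ofReal_re, Complex.sin_ofReal_re]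
  have hc : Real.cos (θ - φ) = 1 - 2 * Real.sin ((θ - φ) / 2) ^ 2 := by
    have h := Real.cos_two_mul ((θ - φ) / 2)
    have h3 : 2 * ((θ - φ) / 2) = θ - φ := by ring
    rw [h3] at h
    nlinarith [Real.sin_sq_add_cos_sq ((θ - φ) / 2)]
  have hcs : Real.cos θ * Real.cos φ + Real.sin θ * Real.sin φ
      = 1 - 2 * Real.sin ((θ - φ) / 2) ^ 2 := by rw [← Real.cos_sub, hc]
  linear_combination (1:ℝ) * Real.sin_sq_add_cos_sq θ + r^2 * Real.sin_sq_add_cos_sq φ - 2*r*hcs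

lemma sin_lb_aux {x : ℝ} (h1 : π/8 ≤ x) (h2 : x ≤ 7*π/8) : Real.sin (π/8) ≤ Real.sin x := by
  have hpi := Real.pi_pos
  rcases le_or_gt x (π/2) with hx | hx
  · exact Real.sin_le_sin_of_le_of_le_pi_div_two (by linarith) hx h1
  · nth_rewrite 2 [← Real.sin_pi_sub]
    exact Real.sin_le_sin_of_le_of_le_pi_div_two (by linarith) (by linarith) (by linarith)

theorem stmt_11 (c : ℕ) (hc : 1 ≤ c) (αl : ℝ)
    (hαl : π / 8 < αl ∧ αl ≤ 3 * π / 8)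
    (t : ℂ)
    (ht : t = (Real.sqrt (1 - 1 / (c + 1)) : ℝ) * Complex.exp (Complex.I * αl))
    (α : ℝ) (hα : α ∈ Set.Icc (0 : ℝ) (π / 2)) :
    Real.sin (π / 8) ^ 2 ≤
        ‖Complex.exp (Complex.I * (2 * α)) - (starRingEnd ℂ t) ^ 2‖ ^ 2 ∧
      1 / ((c : ℝ) + 1) ^ 2 + (8 / π ^ 2) * (αl - α) ^ 2 ≤
        ‖Complex.exp (Complex.I * (2 * α)) - t ^ 2‖ ^ 2 := by
  have hpi := Real.pi_pos
  obtain ⟨hαl1, hαl2⟩ := hαl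
  obtain ⟨hα1, hα2⟩ := hα
  have hc1 : (1:ℝ) ≤ (c:ℝ) := by exact_mod_cast hc
  set r2 : ℝ := 1 - 1 / ((c:ℝ) + 1) with hr2def
  clear_value r2
  have hcpos : (0:ℝ) < (c:ℝ) + 1 := by linarith
  have hinv : 1 / ((c:ℝ) + 1) ≤ 1/2 := by
    rw [div_le_div_iff₀ hcpos (by norm_num)]; linarith
  have hinvpos : 0 < 1 / ((c:ℝ) + 1) := by positivity
  have hr2half : 1/2 ≤ r2 := by rw [hr2def]; linarith
  have hr2nonneg : 0 ≤ r2 := le_trans (by norm_num) hr2half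
  have hsq : ((Real.sqrt r2 : ℝ) : ℂ) ^ 2 = (r2 : ℂ) := by
    rw [← Complex.ofReal_pow, Real.sq_sqrt hr2nonneg]
  have hexp2 : ∀ β : ℝ, Complex.exp (Complex.I * (β:ℂ)) ^ 2
      = Complex.exp (Complex.I * ((2*β : ℝ) : ℂ)) := by
    intro β
    rw [sq, ← Complex.exp_add, show Complex.I * ((β:ℝ):ℂ) + Complex.I * ((β:ℝ):ℂ)
      = Complex.I * (((2*β : ℝ)):ℂ) by push_cast; ring]
  have htc : t = ((Real.sqrt r2 : ℝ) : ℂ) * Complex.exp (Complex.I * αl) := by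
    exact ht
  have ht2 : t ^ 2 = (r2 : ℂ) * Complex.exp (Complex.I * ((2*αl : ℝ) : ℂ)) := by
    rw [htc, mul_pow, hsq, hexp2]
  have htconj : (starRingEnd ℂ t) ^ 2
      = (r2 : ℂ) * Complex.exp (Complex.I * ((-(2*αl) : ℝ) : ℂ)) := by
    rw [htc, map_mul, mul_pow, Complex.conj_ofReal, hsq, ← Complex.exp_conj]
    rw [show (starRingEnd ℂ) (Complex.I * (αl:ℂ)) = Complex.I * (((-αl : ℝ)) : ℂ) by
      push_cast
      simp [map_mul, Complex.conj_I, Complex.conj_ofReal]]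
    rw [hexp2 (-αl)]
    norm_num
  constructor
  · rw [htconj, show Complex.I * (2 * (α:ℂ)) = Complex.I * ((2*α : ℝ) : ℂ) by push_cast; ring,
      abs_sq_key r2 (2*α) (-(2*αl))]
    have harg : (2*α - -(2*αl)) / 2 = α + αl := by ring
    rw [harg]
    have hs : Real.sin (π/8) ≤ Real.sin (α + αl) :=
      sin_lb_aux (by linarith) (by linarith)
    have hs0 : 0 ≤ Real.sin (π/8) := Real.sin_nonneg_of_nonneg_of_le_pi (by positivity) (by linarith)
    nlinarith [sq_nonneg (1 - r2)]
  · rw [ht2, show Complex.I * (2 * (α:ℂ)) = Complex.I * ((2*α : ℝ) : ℂ) by push_cast; ring,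
      abs_sq_key r2 (2*α) (2*αl)]
    have harg : (2*α - 2*αl) / 2 = α - αl := by ring
    rw [harg]
    have h1r : 1 - r2 = 1 / ((c:ℝ) + 1) := by rw [hr2def]; ring
    have habsle : |αl - α| ≤ π/2 := by
      rw [abs_le]; constructor <;> linarith
    have hj : 2 / π * |αl - α| ≤ Real.sin |αl - α| :=
      Real.mul_le_sin (abs_nonneg _) habsle
    have hsin_eq : Real.sin (α - αl) ^ 2 = Real.sin |αl - α| ^ 2 := by
      rcases abs_cases (αl - α) with ⟨h, _⟩ | ⟨h, _⟩ <;> rw [h] <;>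
        rw [show α - αl = -(αl - α) by ring, Real.sin_neg] <;> ring
    have hsabs0 : 0 ≤ Real.sin |αl - α| :=
      Real.sin_nonneg_of_nonneg_of_le_pi (abs_nonneg _) (by linarith)
    have hsq2 : (4 / π^2) * (αl - α)^2 ≤ Real.sin |αl - α| ^ 2 := by
      have hnn : 0 ≤ 2 / π * |αl - α| := by positivity
      have h2 : (2 / π * |αl - α|)^2 ≤ Real.sin |αl - α| ^ 2 := by
        apply sq_le_sq' (by linarith) hj
      calc (4 / π^2) * (αl - α)^2 = (2 / π * |αl - α|)^2 := by
            rw [mul_pow, _root_.sq_abs]; ring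
        _ ≤ _ := h2
    rw [h1r, hsin_eq]
    have h14 : (1 / ((c:ℝ)+1))^2 = 1 / ((c:ℝ)+1)^2 := by
      rw [div_pow, one_pow]
    have hprod : 0 ≤ (4*r2 - 2) * Real.sin |αl - α| ^ 2 :=
      mul_nonneg (by linarith) (sq_nonneg _)
    have hfin : (8/π^2)*(αl-α)^2 ≤ 4 * r2 * Real.sin |αl - α| ^ 2 := by
      have hdouble : (8/π^2)*(αl-α)^2 = 2*(4 / π ^ 2 * (αl - α) ^ 2) := by ring
      rw [hdouble]
      nlinarith [hsq2, hprod]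
    linarith
end

section
/- Let G, 𝒢 > 0 with 𝒢 ≤ G. There is an absolute constant C such that ∫₀¹ ((1−x)²/g(x) + x² g(x))^{−2} dx ≤ C (G + 1/𝒢) for every measurable function g : [0,1] → ℝ with 𝒢 ≤ g(x) ≤ G for all x. -/
open MeasureTheory Set

lemma antideriv1 (a : ℝ) (ha : 0 < a) :
    ∫ x in (0:ℝ)..(1/2), 1/(a + x/2)^2 = 2/a - 2/(a+1/4) := by
  have key : ∀ x ∈ Set.uIcc (0:ℝ) (1/2), HasDerivAt (fun y => -2 * (a + y/2)⁻¹)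
      (1/(a + x/2)^2) x := by
    intro x hx
    rw [Set.uIcc_of_le (by norm_num)] at hx
    have hx0 : 0 ≤ x := hx.1
    have hpos : (0:ℝ) < a + x/2 := by linarith
    have h1 : HasDerivAt (fun y : ℝ => a + y/2) (1/2) x := by
      simpa using ((hasDerivAt_id x).div_const 2).const_add a
    have h2 := (h1.inv (ne_of_gt hpos)).const_mul (-2 : ℝ)
    refine h2.congr_deriv ?_
    ring
  have hcont : ContinuousOn (fun x => 1/(a + x/2)^2) (Set.uIcc (0:ℝ) (1/2)) := by
    apply ContinuousOn.div continuousOn_const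
    · fun_prop
    · intro x hx
      rw [Set.uIcc_of_le (by norm_num)] at hx
      have : (0:ℝ) < a + x/2 := by linarith [hx.1]
      positivity
  rw [intervalIntegral.integral_eq_sub_of_hasDerivAt key
    (hcont.intervalIntegrable)]
  have h1 : (0:ℝ) < a + 1/4 := by linarith
  field_simp
  ring

lemma antideriv2 (b : ℝ) (hb : 0 < b) :
    ∫ x in (1/2:ℝ)..1, 1/(b + (1-x)/2)^2 = 2/b - 2/(b+1/4) := by
  have key : ∀ x ∈ Set.uIcc (1/2:ℝ) 1, HasDerivAt (fun y => 2 * (b + (1-y)/2)⁻¹)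
      (1/(b + (1-x)/2)^2) x := by
    intro x hx
    rw [Set.uIcc_of_le (by norm_num)] at hx
    have hx1 : x ≤ 1 := hx.2
    have hpos : (0:ℝ) < b + (1-x)/2 := by linarith
    have h1 : HasDerivAt (fun y : ℝ => b + (1-y)/2) (-(1/2)) x := by
      have h0 : HasDerivAt (fun y : ℝ => 1 - y) (-1) x := by
        simpa using (hasDerivAt_id x).const_sub 1
      have := (h0.div_const 2).const_add b
      exact this.congr_deriv (by norm_num)
    have h2 := (h1.inv (ne_of_gt hpos)).const_mul (2 : ℝ)
    have hne : ((b + (1-x)/2)^2) ≠ 0 := by positivity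
    refine h2.congr_deriv ?_
    rw [neg_neg, ← mul_div_assoc]
    norm_num
  have hcont : ContinuousOn (fun x => 1/(b + (1-x)/2)^2) (Set.uIcc (1/2:ℝ) 1) := by
    apply ContinuousOn.div continuousOn_const
    · fun_prop
    · intro x hx
      rw [Set.uIcc_of_le (by norm_num)] at hx
      have : (0:ℝ) < b + (1-x)/2 := by linarith [hx.2]
      positivity
  rw [intervalIntegral.integral_eq_sub_of_hasDerivAt key
    (hcont.intervalIntegrable)]
  have h1 : (0:ℝ) < b + 1/4 := by linarith
  field_simp
  ring

set_option maxHeartbeats 1000000 in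
theorem stmt_13 :
    ∃ C : ℝ, 0 < C ∧
      ∀ G 𝒢 : ℝ, 0 < 𝒢 → 𝒢 ≤ G →
        ∀ g : ℝ → ℝ, Measurable g →
          (∀ x ∈ Set.Icc (0 : ℝ) 1, 𝒢 ≤ g x ∧ g x ≤ G) →
            (∫ x in (0 : ℝ)..1, 1 / ((1 - x) ^ 2 / g x + x ^ 2 * g x) ^ 2) ≤
              C * (G + 1 / 𝒢) := by
  refine ⟨16, by norm_num, ?_⟩
  intro G 𝒢 h𝒢 hG𝒢 g hgm hb
  have hG : 0 < G := lt_of_lt_of_le h𝒢 hG𝒢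
  set f : ℝ → ℝ := fun x => 1 / ((1 - x) ^ 2 / g x + x ^ 2 * g x) ^ 2 with hf
  set a : ℝ := 1/(8*G) with ha
  set b : ℝ := 𝒢/8 with hbdef
  have ha0 : 0 < a := by positivity
  have hb0 : 0 < b := by positivity
  -- key pointwise lower bounds on the denominator
  have hD : ∀ x ∈ Set.Icc (0:ℝ) 1,
      2 * x * (1 - x) ≤ (1 - x) ^ 2 / g x + x ^ 2 * g x ∧
      (1 - x) ^ 2 / G ≤ (1 - x) ^ 2 / g x + x ^ 2 * g x ∧
      x ^ 2 * 𝒢 ≤ (1 - x) ^ 2 / g x + x ^ 2 * g x := by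
    intro x hx
    obtain ⟨h1, h2⟩ := hb x hx
    have ht0 : 0 < g x := lt_of_lt_of_le h𝒢 h1
    refine ⟨?_, ?_, ?_⟩
    · rw [div_add' _ _ _ (ne_of_gt ht0), le_div_iff₀ ht0]
      nlinarith [sq_nonneg ((1 - x) - x * g x)]
    · have : (1 - x) ^ 2 / G ≤ (1 - x) ^ 2 / g x := by
        apply div_le_div_of_nonneg_left (by positivity) ht0 h2
      nlinarith [sq_nonneg x, ht0.le, mul_nonneg (sq_nonneg x) ht0.le]
    · have h3 : x ^ 2 * 𝒢 ≤ x ^ 2 * g x := by nlinarith [sq_nonneg x]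
      have h4 : 0 ≤ (1 - x) ^ 2 / g x := by positivity
      linarith
  -- pointwise bounds by the comparison functions
  have hp1 : ∀ x ∈ Set.Icc (0:ℝ) (1/2), f x ≤ 1/(a + x/2)^2 := by
    intro x hx
    have hx01 : x ∈ Set.Icc (0:ℝ) 1 := ⟨hx.1, by linarith [hx.2]⟩
    obtain ⟨hd1, hd2, _⟩ := hD x hx01
    have h14 : 1/(4*G) ≤ (1 - x) ^ 2 / G := by
      rw [div_le_div_iff₀ (by positivity) hG]
      nlinarith [mul_nonneg hG.le (sq_nonneg (1/2 - x)),
        mul_nonneg hG.le (by linarith [hx.2] : (0:ℝ) ≤ 1 - 2*x)]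
    have hx2 : x ≤ 2 * x * (1 - x) := by nlinarith [hx.1, hx.2]
    have hDa : a + x/2 ≤ (1 - x) ^ 2 / g x + x ^ 2 * g x := by
      rw [ha]
      have : 1/(8*G) = (1/(4*G))/2 := by ring
      rw [this]
      linarith
    have hpos : 0 < a + x/2 := by linarith [hx.1]
    rw [hf]
    apply div_le_div_of_nonneg_left (by norm_num) (by positivity)
    exact pow_le_pow_left₀ hpos.le hDa 2
  have hp2 : ∀ x ∈ Set.Icc (1/2:ℝ) 1, f x ≤ 1/(b + (1-x)/2)^2 := by
    intro x hx
    have hx01 : x ∈ Set.Icc (0:ℝ) 1 := ⟨by linarith [hx.1], hx.2⟩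
    obtain ⟨hd1, _, hd3⟩ := hD x hx01
    have h14 : 𝒢/4 ≤ x ^ 2 * 𝒢 := by
      nlinarith [mul_nonneg h𝒢.le (sq_nonneg (x - 1/2)),
        mul_nonneg h𝒢.le (by linarith [hx.1] : (0:ℝ) ≤ 2*x - 1)]
    have hx2 : (1 - x) ≤ 2 * x * (1 - x) := by nlinarith [hx.1, hx.2]
    have hDb : b + (1-x)/2 ≤ (1 - x) ^ 2 / g x + x ^ 2 * g x := by
      rw [hbdef]
      have : 𝒢/8 = (𝒢/4)/2 := by ring
      rw [this]
      linarith
    have hpos : 0 < b + (1-x)/2 := by linarith [hx.2]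
    rw [hf]
    apply div_le_div_of_nonneg_left (by norm_num) (by positivity)
    exact pow_le_pow_left₀ hpos.le hDb 2
  -- integrability of f on subintervals of [0,1]
  have hmeas : Measurable f := by
    apply Measurable.div measurable_const
    fun_prop
  have hfnn : ∀ x, 0 ≤ f x := by
    intro x; rw [hf]; positivity
  have hint : ∀ u v : ℝ, 0 ≤ u → u ≤ v → v ≤ 1 → IntervalIntegrable f volume u v := by
    intro u v hu huv hv
    rw [intervalIntegrable_iff_integrableOn_Icc_of_le huv]
    set m : ℝ := min (1/(4*G)) (𝒢/4) with hm
    have hm0 : 0 < m := by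
      apply lt_min <;> positivity
    apply Integrable.mono' (integrable_const (1/m^2))
    · exact (hmeas.aestronglyMeasurable).restrict
    · rw [ae_restrict_iff' measurableSet_Icc]
      apply Filter.Eventually.of_forall
      intro x hx
      have hx01 : x ∈ Set.Icc (0:ℝ) 1 := ⟨le_trans hu hx.1, le_trans hx.2 hv⟩
      obtain ⟨_, hd2, hd3⟩ := hD x hx01
      have hmD : m ≤ (1 - x) ^ 2 / g x + x ^ 2 * g x := by
        rcases le_or_gt x (1/2) with h | h
        · refine le_trans (min_le_left _ _) (le_trans ?_ hd2)
          rw [div_le_div_iff₀ (by positivity) hG]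
          nlinarith [mul_nonneg hG.le (sq_nonneg (1/2 - x)),
            mul_nonneg hG.le (by linarith : (0:ℝ) ≤ 1 - 2*x)]
        · refine le_trans (min_le_right _ _) (le_trans ?_ hd3)
          nlinarith [mul_nonneg h𝒢.le (sq_nonneg (x - 1/2)),
            mul_nonneg h𝒢.le (by linarith : (0:ℝ) ≤ 2*x - 1)]
      rw [Real.norm_eq_abs, abs_of_nonneg (hfnn x), hf]
      apply div_le_div_of_nonneg_left (by norm_num) (by positivity)
      exact pow_le_pow_left₀ hm0.le hmD 2
  -- comparison functions are interval integrable
  have hc1 : IntervalIntegrable (fun x => 1/(a + x/2)^2) volume 0 (1/2) := by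
    apply ContinuousOn.intervalIntegrable
    apply ContinuousOn.div continuousOn_const
    · fun_prop
    · intro x hx
      rw [Set.uIcc_of_le (by norm_num)] at hx
      have : (0:ℝ) < a + x/2 := by linarith [hx.1]
      positivity
  have hc2 : IntervalIntegrable (fun x => 1/(b + (1-x)/2)^2) volume (1/2) 1 := by
    apply ContinuousOn.intervalIntegrable
    apply ContinuousOn.div continuousOn_const
    · fun_prop
    · intro x hx
      rw [Set.uIcc_of_le (by norm_num)] at hx
      have : (0:ℝ) < b + (1-x)/2 := by linarith [hx.2]
      positivity
  -- split and estimate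
  have hsplit : (∫ x in (0:ℝ)..1, f x)
      = (∫ x in (0:ℝ)..(1/2), f x) + ∫ x in (1/2:ℝ)..1, f x := by
    rw [intervalIntegral.integral_add_adjacent_intervals
      (hint 0 (1/2) le_rfl (by norm_num) (by norm_num))
      (hint (1/2) 1 (by norm_num) (by norm_num) le_rfl)]
  have h1 : (∫ x in (0:ℝ)..(1/2), f x) ≤ 2/a - 2/(a+1/4) := by
    rw [← antideriv1 a ha0]
    apply intervalIntegral.integral_mono_on (by norm_num)
      (hint 0 (1/2) le_rfl (by norm_num) (by norm_num)) hc1 hp1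
  have h2 : (∫ x in (1/2:ℝ)..1, f x) ≤ 2/b - 2/(b+1/4) := by
    rw [← antideriv2 b hb0]
    apply intervalIntegral.integral_mono_on (by norm_num)
      (hint (1/2) 1 (by norm_num) (by norm_num) le_rfl) hc2 hp2
  have ha4 : 0 < a + 1/4 := by linarith
  have hb4 : 0 < b + 1/4 := by linarith
  have e1 : 2/a = 16*G := by rw [ha]; field_simp; ring
  have e2 : 2/b = 16/𝒢 := by rw [hbdef]; field_simp; ring
  have t1 : 2/(a+1/4) > 0 := by positivity
  have t2 : 2/(b+1/4) > 0 := by positivity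
  calc (∫ x in (0:ℝ)..1, f x)
      = (∫ x in (0:ℝ)..(1/2), f x) + ∫ x in (1/2:ℝ)..1, f x := hsplit
    _ ≤ (2/a - 2/(a+1/4)) + (2/b - 2/(b+1/4)) := by linarith
    _ ≤ 2/a + 2/b := by linarith
    _ = 16 * (G + 1/𝒢) := by rw [e1, e2]; ring
end
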